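/- For all integers d, k, l ≥ 2 and every binary code matrix M ∈ {±1}^{k×l}, the Natarajan dimension of the ECOC class W^d_M built on halfspaces over ℝ^d satisfies d_N(W^d_M) ≥ d·δ(M)/2, where δ(M) is the minimal Hamming distance between any two distinct rows of M. -/

import Mathlib

open MeasureTheory
open scoped ENNReal

noncomputable def argmaxFin {k : ℕ} [NeZero k] (f : Fin k → ℝ) : Fin k :=
  (Finset.univ.filter fun i => ∀ j, f j ≤ f i).min' (by
    obtain ⟨i, -, hi⟩ := Finset.exists_max_image (Finset.univ : Finset (Fin k)) f
      ⟨⟨0, Nat.pos_of_ne_zero (NeZero.ne k)⟩, Finset.mem_univ _⟩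
    exact ⟨i, Finset.mem_filter.mpr ⟨Finset.mem_univ _, fun j => hi j (Finset.mem_univ _)⟩⟩)

def aug {d : ℕ} (x : Fin d → ℝ) : Fin (d + 1) → ℝ := Fin.snoc x 1

/-- halfspaces over ℝ^d, `true` ↔ +1, sign(0) = 1 -/
def halfspace (d : ℕ) : Set ((Fin d → ℝ) → Bool) :=
  { h | ∃ w : Fin (d + 1) → ℝ, h = fun x => decide (0 ≤ ∑ i, w i * aug x i) }

noncomputable def msvm (d k : ℕ) [NeZero k] : Set ((Fin d → ℝ) → Fin k) :=
  { h | ∃ W : Fin k → Fin (d + 1) → ℝ,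
      h = fun x => argmaxFin (fun i => ∑ j, W i j * aug x j) }

def NShatters {X Y : Type*} (H : Set (X → Y)) (S : Set X) : Prop :=
  ∃ f₁ f₂ : X → Y, (∀ x ∈ S, f₁ x ≠ f₂ x) ∧
    ∀ T ⊆ S, ∃ g ∈ H, (∀ x ∈ T, g x = f₁ x) ∧ ∀ x ∈ S \ T, g x = f₂ x

def GShatters {X Y : Type*} (H : Set (X → Y)) (S : Set X) : Prop :=
  ∃ f : X → Y, ∀ T ⊆ S, ∃ g ∈ H, (∀ x ∈ T, g x = f x) ∧ ∀ x ∈ S \ T, g x ≠ f x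

def VCDimLE {X : Type*} (H : Set (X → Bool)) (d : ℕ) : Prop :=
  ∀ S : Finset X, (∀ b : X → Bool, ∃ h ∈ H, ∀ x ∈ S, h x = b x) → S.card ≤ d

inductive LTree (k : ℕ) : Type where
  | leaf : Fin k → LTree k
  | node : LTree k → LTree k → LTree k

def LTree.labels {k : ℕ} : LTree k → List (Fin k)
  | .leaf i => [i]
  | .node l r => l.labels ++ r.labels

/-- `T` is a tree for `k` classes: its leaf labels form a bijection with `[k]`. -/
def LTree.IsTreeFor {k : ℕ} (T : LTree k) : Prop := T.labels.Perm (List.finRange k)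

def treeClass {X : Type*} {k : ℕ} (H : Set (X → Bool)) : LTree k → Set (X → Fin k)
  | .leaf i => {fun _ => i}
  | .node l r => { f | ∃ c ∈ H, ∃ fl ∈ treeClass H l, ∃ fr ∈ treeClass H r,
      f = fun x => if c x then fr x else fl x }

def treesClass {X : Type*} (H : Set (X → Bool)) (k : ℕ) : Set (X → Fin k) :=
  ⋃ T ∈ { T : LTree k | T.IsTreeFor }, treeClass H T

noncomputable def decode {k : ℕ} [NeZero k] {J : Type*} [Fintype J]
    (M : Fin k → J → ℝ) (u : J → Bool) : Fin k :=
  argmaxFin (fun i => ∑ j, M i j * (if u j then (1 : ℝ) else -1))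

noncomputable def ecocClass {X : Type*} {k : ℕ} [NeZero k] {J : Type*} [Fintype J]
    (H : Set (X → Bool)) (M : Fin k → J → ℝ) : Set (X → Fin k) :=
  { g | ∃ h : J → X → Bool, (∀ j, h j ∈ H) ∧ g = fun x => decode M (fun j => h j x) }

def ovaCode (k : ℕ) : Fin k → Fin k → ℝ := fun i j => if i = j then 1 else -1

def apCode (k : ℕ) : Fin k → { p : Fin k × Fin k // p.1 < p.2 } → ℝ :=
  fun i p => if i = p.1.1 then -1 else if i = p.1.2 then 1 else 0

noncomputable def errStar {X : Type*} [MeasurableSpace X] {k : ℕ}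
    (D : Measure (X × Fin k)) (H : Set (X → Fin k)) : ℝ≥0∞ :=
  ⨅ h ∈ H, D { p | h p.1 ≠ p.2 }

noncomputable def errStarBin {X : Type*} [MeasurableSpace X]
    (Q : Measure (X × Bool)) (H : Set (X → Bool)) : ℝ≥0∞ :=
  ⨅ h ∈ H, Q { p | h p.1 ≠ p.2 }

inductive PTree : Type where
  | leaf : PTree
  | node : PTree → PTree → PTree

def PTree.nLeaves : PTree → ℕ
  | .leaf => 1
  | .node l r => l.nLeaves + r.nLeaves

def PTree.leftLeaves : PTree → ℕ
  | .leaf => 0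
  | .node l _ => l.nLeaves

def PTree.rightLeaves : PTree → ℕ
  | .leaf => 0
  | .node _ r => r.nLeaves

def PTree.labelAux {k : ℕ} (f : ℕ → Fin k) : PTree → ℕ → LTree k
  | .leaf, n => .leaf (f n)
  | .node l r, n => .node (PTree.labelAux f l n) (PTree.labelAux f r (n + l.nLeaves))


/-! ### Auxiliary machinery for stmt5 -/

section Stmt5Aux

lemma argmaxFin_eq {k : ℕ} [NeZero k] {f : Fin k → ℝ} {i : Fin k}
    (h : ∀ c, c ≠ i → f c < f i) : argmaxFin f = i := by
  have key : ∀ c ∈ Finset.univ.filter fun c => ∀ j, f j ≤ f c, c = i := by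
    intro c hc
    simp only [Finset.mem_filter, Finset.mem_univ, true_and] at hc
    by_contra hne
    exact absurd (hc i) (not_le.mpr (h c hne))
  exact key _ (Finset.min'_mem _ _)

noncomputable def linf {d : ℕ} (v : Fin d → ℝ) (b : ℝ) : (Fin d → ℝ) → Bool :=
  fun x => decide (0 ≤ (∑ i, v i * x i) + b)

lemma linf_mem {d : ℕ} (v : Fin d → ℝ) (b : ℝ) : linf v b ∈ halfspace d := by
  refine ⟨(Fin.snoc v b : Fin (d+1) → ℝ), ?_⟩
  funext x
  have hs : ∑ i, (Fin.snoc v b : Fin (d+1) → ℝ) i * aug x i = (∑ i, v i * x i) + b := by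
    rw [Fin.sum_univ_castSucc]
    simp [aug, Fin.snoc_castSucc, Fin.snoc_last]
  rw [linf, hs]

lemma sum_support3 {d : ℕ} (hd : 2 ≤ d) {a : ℕ} (ha : a < d) (f : Fin d → ℝ)
    (h : ∀ i : Fin d, (i:ℕ) ≠ 0 → (i:ℕ) ≠ 1 → (i:ℕ) ≠ a → f i = 0) :
    ∑ i, f i = f ⟨0, by omega⟩ + f ⟨1, by omega⟩ + (if 2 ≤ a then f ⟨a, ha⟩ else 0) := by
  classical
  have h0 : (0:ℕ) < d := by omega
  have h1 : (1:ℕ) < d := by omega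
  by_cases h2 : 2 ≤ a
  · rw [if_pos h2]
    have hsub : ({⟨0,h0⟩, ⟨1,h1⟩, ⟨a,ha⟩} : Finset (Fin d)) ⊆ Finset.univ := Finset.subset_univ _
    rw [← Finset.sum_subset hsub ?van]
    · rw [Finset.sum_insert (by simp [Fin.ext_iff]; omega),
        Finset.sum_insert (by simp [Fin.ext_iff]; omega), Finset.sum_singleton]
      ring
    case van =>
      intro i _ hi
      simp only [Finset.mem_insert, Finset.mem_singleton, Fin.ext_iff] at hi
      push_neg at hi
      exact h i hi.1 hi.2.1 hi.2.2
  · rw [if_neg h2]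
    have hsub : ({⟨0,h0⟩, ⟨1,h1⟩} : Finset (Fin d)) ⊆ Finset.univ := Finset.subset_univ _
    rw [← Finset.sum_subset hsub ?van2]
    · rw [Finset.sum_insert (by simp [Fin.ext_iff]), Finset.sum_singleton]
      ring
    case van2 =>
      intro i _ hi
      simp only [Finset.mem_insert, Finset.mem_singleton, Fin.ext_iff] at hi
      push_neg at hi
      exact h i hi.1 hi.2 (by omega)

noncomputable def pt (d t a : ℕ) : Fin d → ℝ := fun c =>
  if (c : ℕ) = 0 then (t : ℝ) + (if a = 1 then 4⁻¹ else 0)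
  else if (c : ℕ) = 1 then (t : ℝ)^2 + (if a = 1 then 2 * (t:ℝ) * 4⁻¹ else 0)
  else if (c : ℕ) = a then 4⁻¹ else 0

noncomputable def coefv (d t : ℕ) (β : ℕ → ℝ) (e : ℝ) : Fin d → ℝ := fun i =>
  if (i : ℕ) = 0 then 4 * (β 1 - β 0) - 2 * t * e
  else if (i : ℕ) = 1 then e
  else 4 * (β (i : ℕ) - β 0)

noncomputable def coefb (t : ℕ) (β : ℕ → ℝ) (e : ℝ) : ℝ :=
  β 0 - 4 * t * (β 1 - β 0) + e * (t:ℝ)^2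

lemma eval_pt {d : ℕ} (hd : 2 ≤ d) (t s a : ℕ) (ha : a < d) (β : ℕ → ℝ) (e : ℝ) :
    (∑ i, coefv d t β e i * pt d s a i) + coefb t β e
      = β a + 4 * (β 1 - β 0) * ((s:ℝ) - t)
        + e * (((s:ℝ) - t)^2 + (if a = 1 then ((s:ℝ) - t) / 2 else 0)) := by
  rw [sum_support3 hd ha _ ?van]
  case van =>
    intro i hi0 hi1 hia
    have : pt d s a i = 0 := by simp [pt, hi0, hi1, hia]
    rw [this, mul_zero]
  rcases Nat.lt_or_ge a 2 with h2 | h2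
  · interval_cases a
    · simp only [pt, coefv, coefb]
      norm_num
      ring
    · simp only [pt, coefv, coefb]
      norm_num
      ring
  · have ha0 : a ≠ 0 := by omega
    have ha1 : a ≠ 1 := by omega
    simp only [pt, coefv, coefb, if_pos h2]
    norm_num [ha0, ha1]
    ring

lemma eval_pt_same {d : ℕ} (hd : 2 ≤ d) (t a : ℕ) (ha : a < d) (β : ℕ → ℝ) (e : ℝ) :
    (∑ i, coefv d t β e i * pt d t a i) + coefb t β e = β a := by
  rw [eval_pt hd t t a ha]
  simp

lemma eval_pt_ne {d G : ℕ} (hd : 2 ≤ d) {t s a : ℕ} (ha : a < d) (hs : s < G) (ht : t < G)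
    (hst : s ≠ t) {β : ℕ → ℝ} (hβ0 : |β 0| ≤ 1) (hβ1 : |β 1| ≤ 1) (hβa : |β a| ≤ 1)
    {c : ℝ} (hc : c = 1 ∨ c = -1) :
    1 ≤ c * ((∑ i, coefv d t β (c * (16*G+12)) i * pt d s a i) + coefb t β (c * (16*G+12))) := by
  rw [eval_pt hd t s a ha]
  set u : ℝ := (s:ℝ) - t with hu
  set K : ℝ := u^2 + (if a = 1 then u / 2 else 0) with hk
  clear_value K
  clear_value u
  have hG : (1:ℝ) ≤ G := by
    have : 1 ≤ G := Nat.one_le_iff_ne_zero.mpr (by omega)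
    exact_mod_cast this
  have huabs : 1 ≤ |u| := by
    rcases Nat.lt_or_ge s t with h | h
    · have : (s:ℝ) + 1 ≤ t := by exact_mod_cast h
      rw [hu, abs_sub_comm, le_abs]; left; linarith
    · have h' : t < s := by omega
      have : (t:ℝ) + 1 ≤ s := by exact_mod_cast h'
      rw [hu, le_abs]; left; linarith
  have h1u : (1:ℝ) ≤ u^2 := by nlinarith [sq_abs u, abs_nonneg u]
  have hsq : |u| ≤ u^2 := by nlinarith [sq_abs u, abs_nonneg u]
  have hb0 := abs_le.mp hβ0
  have hb1 := abs_le.mp hβ1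
  have hba := abs_le.mp hβa
  have hK : u^2 / 2 ≤ K := by
    rw [hk]
    split
    · rcases le_abs.mp huabs with h | h
      · nlinarith
      · nlinarith
    · nlinarith
  have hlin : -(8 * u^2) ≤ 4 * (β 1 - β 0) * u ∧ 4 * (β 1 - β 0) * u ≤ 8 * u^2 := by
    have h8 : |4 * (β 1 - β 0) * u| ≤ 8 * u^2 := by
      rw [abs_mul]
      have hc1 : |4 * (β 1 - β 0)| ≤ 8 := by
        rw [abs_mul]
        have : |β 1 - β 0| ≤ 2 := by rw [abs_le]; constructor <;> linarith
        rw [abs_of_nonneg (by norm_num : (0:ℝ) ≤ 4)]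
        linarith
      calc |4 * (β 1 - β 0)| * |u| ≤ 8 * |u| :=
            mul_le_mul_of_nonneg_right hc1 (abs_nonneg u)
        _ ≤ 8 * u^2 := by linarith
    exact abs_le.mp h8
  have hprod : (8*(G:ℝ)-2) * 1 ≤ (8*G-2)*u^2 :=
    mul_le_mul_of_nonneg_left h1u (by linarith)
  have hKnn : 0 ≤ K := by linarith [sq_nonneg u]
  rcases hc with rfl | rfl
  · have hΛK : (8*(G:ℝ)+6)*u^2 ≤ (16*G+12) * K := by
      have h' := mul_le_mul_of_nonneg_left hK (by linarith : (0:ℝ) ≤ 16*G+12)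
      have heq : (16*(G:ℝ)+12) * (u^2/2) = (8*G+6)*u^2 := by ring
      linarith
    simp only [one_mul]
    linarith [hlin.1, hprod, hba.1, hΛK]
  · have hΛK : (8*(G:ℝ)+6)*u^2 ≤ (16*G+12) * K := by
      have h' := mul_le_mul_of_nonneg_left hK (by linarith : (0:ℝ) ≤ 16*G+12)
      have heq : (16*(G:ℝ)+12) * (u^2/2) = (8*G+6)*u^2 := by ring
      linarith
    have expand : (-1:ℝ) * (β a + 4 * (β 1 - β 0) * u + -1 * (16*G+12) * K)
        = -(β a) - 4 * (β 1 - β 0) * u + (16*G+12) * K := by ring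
    rw [expand]
    linarith [hlin.2, hprod, hba.2, hΛK]

lemma decode_eq_target {k l : ℕ} [NeZero k] (M : Fin k → Fin l → ℝ)
    (hM : ∀ i j, M i j = 1 ∨ M i j = -1) (δ : ℕ) (τ : Fin k)
    (hδ : ∀ c, c ≠ τ → δ ≤ hammingDist (M τ) (M c))
    (u : Fin l → Bool) (N : Finset (Fin l))
    (hN : ∀ j, j ∉ N → (if u j then (1:ℝ) else -1) = M τ j)
    (hcard : 4 * N.card < 2 * δ) :
    decode M u = τ := by
  unfold decode
  apply argmaxFin_eq
  intro c hc
  have pw : ∀ j, ((1:ℝ) - M c j * M τ j) - (if j ∈ N then 4 else 0)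
      ≤ (M τ j - M c j) * (if u j then (1:ℝ) else -1) := by
    intro j
    by_cases hj : j ∈ N
    · rw [if_pos hj]
      rcases hM τ j with h1 | h1 <;> rcases hM c j with h2 | h2 <;>
        cases hu : u j <;> simp [h1, h2] <;> norm_num
    · rw [if_neg hj, hN j hj]
      rcases hM τ j with h1 | h1 <;> rcases hM c j with h2 | h2 <;>
        rw [h1, h2] <;> norm_num
  have hsum := Finset.sum_le_sum (fun j (_ : j ∈ Finset.univ) => pw j)
  have e1 : ∑ j, (((1:ℝ) - M c j * M τ j) - (if j ∈ N then 4 else 0))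
      = 2 * (hammingDist (M τ) (M c) : ℝ) - 4 * N.card := by
    rw [Finset.sum_sub_distrib]
    congr 1
    · have hpt : ∀ j : Fin l, (1:ℝ) - M c j * M τ j = if M τ j ≠ M c j then 2 else 0 := by
        intro j
        rcases hM τ j with h1 | h1 <;> rcases hM c j with h2 | h2 <;> simp [h1, h2] <;> norm_num
      rw [Finset.sum_congr rfl (fun j _ => hpt j)]
      rw [Finset.sum_ite, Finset.sum_const, Finset.sum_const]
      simp [hammingDist, mul_comm]
    · rw [Finset.sum_ite_mem, Finset.univ_inter, Finset.sum_const]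
      simp [mul_comm]
  have hdd : (δ : ℝ) ≤ hammingDist (M τ) (M c) := by exact_mod_cast hδ c hc
  have hc' : 4 * (N.card : ℝ) < 2 * δ := by exact_mod_cast hcard
  have key : (0:ℝ) < ∑ j, (M τ j - M c j) * (if u j then (1:ℝ) else -1) := by
    rw [e1] at hsum
    linarith
  have hsplit := Finset.sum_sub_distrib (s := Finset.univ)
    (f := fun j => M τ j * (if u j then (1:ℝ) else -1))
    (g := fun j => M c j * (if u j then (1:ℝ) else -1))
  simp only [← sub_mul] at hsplit
  rw [hsplit] at key
  linarith

lemma pt_inj {d : ℕ} (hd : 2 ≤ d) {t a t' a' : ℕ} (ha : a < d) (ha' : a' < d)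
    (h : pt d t a = pt d t' a') : t = t' ∧ a = a' := by
  have key : ∀ (u u' b b' : ℕ), b < d → b' < d → b ≠ 1 → b' ≠ 1 → 2 ≤ b →
      pt d u b = pt d u' b' → b = b' := by
    intro u u' b b' hb hb' hb1 hb1' hb2 heq
    by_contra hbb
    have e0 : b ≠ 0 := by omega
    have hc := congrFun heq ⟨b, hb⟩
    simp [pt, e0, hb1, hbb] at hc
  have h0 : (t:ℝ) + (if a = 1 then (4:ℝ)⁻¹ else 0)
      = (t':ℝ) + (if a' = 1 then (4:ℝ)⁻¹ else 0) := by
    have := congrFun h ⟨0, by omega⟩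
    simpa [pt] using this
  by_cases e1 : a = 1 <;> by_cases e1' : a' = 1
  · rw [if_pos e1, if_pos e1'] at h0
    have : t = t' := by exact_mod_cast (by linarith : (t:ℝ) = t')
    exact ⟨this, by omega⟩
  · rw [if_pos e1, if_neg e1'] at h0
    have h4 : (4 * t + 1 : ℝ) = 4 * t' := by linarith
    have : 4 * t + 1 = 4 * t' := by exact_mod_cast h4
    omega
  · rw [if_neg e1, if_pos e1'] at h0
    have h4 : (4 * t : ℝ) = 4 * t' + 1 := by linarith
    have : 4 * t = 4 * t' + 1 := by exact_mod_cast h4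
    omega
  · rw [if_neg e1, if_neg e1'] at h0
    have htt : t = t' := by exact_mod_cast (by linarith : (t:ℝ) = t')
    refine ⟨htt, ?_⟩
    by_cases haa : a = a'
    · exact haa
    · exfalso
      rcases Nat.lt_or_ge a 2 with h2 | h2
      · have ha2' : 2 ≤ a' := by omega
        exact (by omega : a' ≠ a) (key t' t a' a ha' ha e1' e1 ha2' h.symm)
      · exact haa (key t t' a a' ha ha' e1 e1' h2 h)

lemma card_parity_filter {δ : ℕ} (G s : ℕ) (hG : δ ≤ 2 * G) (hs : s < G) (r : ℕ) :
    ((Finset.univ : Finset (Fin δ)).filter fun p : Fin δ => (p : ℕ) % 2 = r ∧ (p : ℕ) / 2 ≠ s).card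
      ≤ G - 1 := by
  have hmain : ((Finset.univ : Finset (Fin δ)).filter
      fun p : Fin δ => (p : ℕ) % 2 = r ∧ (p : ℕ) / 2 ≠ s).card
      ≤ ((Finset.range G).erase s).card := by
    apply Finset.card_le_card_of_injOn (fun p : Fin δ => (p : ℕ) / 2)
    · intro p hp
      simp only [Finset.coe_filter, Finset.mem_coe, Finset.mem_filter, Finset.mem_univ, true_and, Set.mem_setOf_eq] at hp ⊢
      rw [Finset.mem_erase, Finset.mem_range]
      refine ⟨hp.2, ?_⟩
      have := p.isLt
      omega
    · intro p hp q hq hpq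
      simp only [Finset.coe_filter, Finset.mem_univ, true_and, Set.mem_setOf_eq] at hp hq
      have hpq' : (p : ℕ) / 2 = (q : ℕ) / 2 := hpq
      have : (p : ℕ) = (q : ℕ) := by omega
      exact Fin.ext this
  rw [Finset.card_erase_of_mem (Finset.mem_range.mpr hs), Finset.card_range] at hmain
  exact hmain

noncomputable def colHS (d t : ℕ) (β : ℕ → ℝ) (e : ℝ) : (Fin d → ℝ) → Bool :=
  linf (coefv d t β e) (coefb t β e)

lemma colHS_mem {d : ℕ} (t : ℕ) (β : ℕ → ℝ) (e : ℝ) : colHS d t β e ∈ halfspace d :=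
  linf_mem _ _

lemma colHS_same {d : ℕ} (hd : 2 ≤ d) (t : ℕ) {a : ℕ} (ha : a < d) {β : ℕ → ℝ}
    (hβa : β a = 1 ∨ β a = -1) (e : ℝ) :
    (if colHS d t β e (pt d t a) then (1:ℝ) else -1) = β a := by
  have hv : colHS d t β e (pt d t a) = decide (0 ≤ β a) := by
    rw [colHS, linf, eval_pt_same hd t a ha]
  rw [hv]
  rcases hβa with h | h <;> rw [h] <;> norm_num

lemma colHS_ne {d G : ℕ} (hd : 2 ≤ d) {t s a : ℕ} (ha : a < d) (hs : s < G) (ht : t < G)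
    (hst : s ≠ t) {β : ℕ → ℝ} (hβ : ∀ n, β n = 1 ∨ β n = -1)
    {c : ℝ} (hc : c = 1 ∨ c = -1) :
    (if colHS d t β (c * (16*G+12)) (pt d s a) then (1:ℝ) else -1) = c := by
  have habs : ∀ n, |β n| ≤ 1 := by
    intro n; rcases hβ n with h | h <;> rw [h] <;> norm_num
  have h1 := eval_pt_ne (G := G) hd ha hs ht hst (habs 0) (habs 1) (habs a) hc
  rw [colHS, linf]
  rcases hc with rfl | rfl
  · rw [one_mul] at h1
    rw [decide_eq_true (by linarith : (0:ℝ) ≤ _)]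
    norm_num
  · have hneg : (∑ i, coefv d t β (-1 * (16*(G:ℝ)+12)) i * pt d s a i)
        + coefb t β (-1 * (16*(G:ℝ)+12)) ≤ -1 := by nlinarith
    rw [decide_eq_false (by linarith : ¬ (0:ℝ) ≤ _)]
    norm_num

end Stmt5Aux

/-- For all integers d, k, l ≥ 2 and every binary code matrix M ∈ {±1}^{k×l}, the
Natarajan dimension of the ECOC class W^d_M built on halfspaces over ℝ^d is at least
d·δ(M)/2, where δ(M) is the minimal Hamming distance between two distinct rows of M. -/
theorem stmt5 (d k l : ℕ) [NeZero k] (hd : 2 ≤ d) (hk : 2 ≤ k) (hl : 2 ≤ l)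
    (M : Fin k → Fin l → ℝ) (hM : ∀ i j, M i j = 1 ∨ M i j = -1) :
    ∃ S : Finset (Fin d → ℝ), NShatters (ecocClass (halfspace d) M) ↑S ∧
      (d : ℝ) * (sInf { n : ℕ | ∃ i j : Fin k, i < j ∧ n = hammingDist (M i) (M j) } : ℕ) / 2
        ≤ S.card := by
  classical
  have h01 : (⟨0, by omega⟩ : Fin k) < ⟨1, by omega⟩ := by
    rw [Fin.mk_lt_mk]; omega
  have hne : {n : ℕ | ∃ i j : Fin k, i < j ∧ n = hammingDist (M i) (M j)}.Nonempty :=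
    ⟨hammingDist (M ⟨0, by omega⟩) (M ⟨1, by omega⟩), ⟨⟨0, by omega⟩, ⟨1, by omega⟩, h01, rfl⟩⟩
  set δ := sInf {n : ℕ | ∃ i j : Fin k, i < j ∧ n = hammingDist (M i) (M j)} with hδdef
  obtain ⟨i₀, j₀, hij, hdist⟩ := Nat.sInf_mem hne
  have hδle : ∀ a b : Fin k, a ≠ b → δ ≤ hammingDist (M a) (M b) := by
    intro a b hab
    rcases lt_or_gt_of_ne hab with h | h
    · exact Nat.sInf_le ⟨a, b, h, rfl⟩
    · rw [hammingDist_comm]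
      exact Nat.sInf_le ⟨b, a, h, rfl⟩
  by_cases hδ0 : δ = 0
  · refine ⟨∅, ⟨fun _ => i₀, fun _ => j₀, fun x hx => hij.ne, ?_⟩, ?_⟩
    · intro T hT
      refine ⟨fun x => decode M (fun j => linf (fun _ => 0) 1 x),
        ⟨fun _ => linf (fun _ => 0) 1, fun j => linf_mem _ _, rfl⟩, ?_, ?_⟩
      · intro x hx
        exact absurd (hT hx) (by simp)
      · intro x hx
        exact absurd hx.1 (by simp)
    · rw [hδ0]
      simp
  -- main case
  set G := (δ + 1) / 2 with hGdef
  have hGpos : 0 < G := by omega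
  have hδ2G : δ ≤ 2 * G := by omega
  have h2Gδ : 2 * G ≤ δ + 1 := by omega
  set D : Finset (Fin l) := Finset.univ.filter (fun j => M i₀ j ≠ M j₀ j) with hDdef
  have hDcard : D.card = δ := by
    rw [hδdef, hdist, hammingDist]
  set E := D.orderIsoOfFin hDcard with hEdef
  have hδpos : 0 < δ := by omega
  set ecol : Fin δ → Fin l := fun p => (E p : Fin l) with hecoldef
  have hecol_mem : ∀ p, ecol p ∈ D := fun p => (E p).2
  set pcol : Fin l → Fin δ := fun j =>
    if hj : j ∈ D then E.symm ⟨j, hj⟩ else ⟨0, hδpos⟩ with hpcoldef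
  have hpcol : ∀ j, j ∈ D → ecol (pcol j) = j := by
    intro j hj
    rw [hpcoldef, hecoldef]
    simp only [dif_pos hj]
    rw [OrderIso.apply_symm_apply]
  have hinj : Function.Injective (fun q : Fin G × Fin d => pt d (q.1 : ℕ) (q.2 : ℕ)) := by
    intro q q' h
    obtain ⟨h1, h2⟩ := pt_inj hd q.2.isLt q'.2.isLt h
    exact Prod.ext (Fin.ext h1) (Fin.ext h2)
  refine ⟨Finset.image (fun q : Fin G × Fin d => pt d (q.1 : ℕ) (q.2 : ℕ)) Finset.univ, ?_, ?_⟩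
  · -- NShatters
    refine ⟨fun _ => i₀, fun _ => j₀, fun x _ => hij.ne, ?_⟩
    intro T hT
    set τ : (Fin d → ℝ) → Fin k := fun x => if x ∈ T then i₀ else j₀ with hτdef
    set hcols : Fin l → (Fin d → ℝ) → Bool := fun j =>
      if hj : j ∈ D then
        colHS d ((pcol j : ℕ) / 2) (fun n => M (τ (pt d ((pcol j : ℕ) / 2) n)) j)
          ((if (pcol j : ℕ) % 2 = 0 then M i₀ j else M j₀ j) * (16 * (G:ℝ) + 12))
      else linf (fun _ => 0) (M i₀ j) with hhcols
    have hcols_mem : ∀ j, hcols j ∈ halfspace d := by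
      intro j
      rw [hhcols]
      dsimp only
      split
      · exact colHS_mem _ _ _
      · exact linf_mem _ _
    have main : ∀ (s a : ℕ), s < G → a < d →
        decode M (fun j => hcols j (pt d s a)) = τ (pt d s a) := by
      intro s a hs ha1
      have hτx01 : τ (pt d s a) = i₀ ∨ τ (pt d s a) = j₀ := by
        rw [hτdef]
        dsimp only
        split
        · exact Or.inl rfl
        · exact Or.inr rfl
      set τx := τ (pt d s a) with hτxdef
      set rb : ℕ := if τx = i₀ then 1 else 0 with hrbdef
      set P : Finset (Fin δ) :=
        Finset.univ.filter (fun p : Fin δ => (p : ℕ) % 2 = rb ∧ (p : ℕ) / 2 ≠ s) with hPdef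
      refine decode_eq_target M hM δ τx ?_ _ (Finset.image ecol P) ?_ ?_
      · intro c hc
        exact hδle τx c (Ne.symm hc)
      · -- sign condition off N
        intro j hjN
        by_cases hj : j ∈ D
        · have hep : ecol (pcol j) = j := hpcol j hj
          have hplt : ((pcol j : ℕ)) < δ := (pcol j).isLt
          have htG : (pcol j : ℕ) / 2 < G := by omega
          have hcolsj : hcols j (pt d s a)
              = colHS d ((pcol j : ℕ) / 2) (fun n => M (τ (pt d ((pcol j : ℕ) / 2) n)) j)
                ((if (pcol j : ℕ) % 2 = 0 then M i₀ j else M j₀ j) * (16 * (G:ℝ) + 12))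
                (pt d s a) := by
            rw [hhcols]
            dsimp only
            rw [dif_pos hj]
          by_cases hgp : (pcol j : ℕ) / 2 = s
          · rw [hcolsj, hgp]
            have := colHS_same hd s ha1
              (β := fun n => M (τ (pt d s n)) j) (hM (τ (pt d s a)) j) 
              ((if (pcol j : ℕ) % 2 = 0 then M i₀ j else M j₀ j) * (16 * (G:ℝ) + 12))
            rw [this, hτxdef]
          · -- off group
            have hbad : (pcol j : ℕ) % 2 ≠ rb := by
              intro hcontra
              apply hjN
              rw [← hep]
              exact Finset.mem_image_of_mem ecol
                (Finset.mem_filter.mpr ⟨Finset.mem_univ _, hcontra, hgp⟩)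
            rw [hcolsj]
            have hcval : (if (pcol j : ℕ) % 2 = 0 then M i₀ j else M j₀ j) = 1 ∨
                (if (pcol j : ℕ) % 2 = 0 then M i₀ j else M j₀ j) = -1 := by
              split
              · exact hM i₀ j
              · exact hM j₀ j
            have := colHS_ne (G := G) hd ha1 hs htG (fun h => hgp h.symm)
              (β := fun n => M (τ (pt d ((pcol j : ℕ) / 2) n)) j)
              (fun n => hM _ j) hcval
            rw [this]
            rcases hτx01 with h | h
            · have hrb1 : rb = 1 := by rw [hrbdef, if_pos h]
              have heven : (pcol j : ℕ) % 2 = 0 := by omega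
              rw [if_pos heven, h]
            · have hrb0 : rb = 0 := by
                rw [hrbdef, if_neg]
                rw [h]
                exact fun hcon => (hij.ne (hcon.symm)).elim
              have hodd : ¬ ((pcol j : ℕ) % 2 = 0) := by omega
              rw [if_neg hodd, h]
        · -- constant column
          have hcolsj : hcols j (pt d s a) = linf (fun _ => 0) (M i₀ j) (pt d s a) := by
            rw [hhcols]
            dsimp only
            rw [dif_neg hj]
          have heqM : M i₀ j = M j₀ j := by
            by_contra hcon
            exact hj (Finset.mem_filter.mpr ⟨Finset.mem_univ _, hcon⟩)
          have hval : linf (fun _ => 0) (M i₀ j) (pt d s a) = decide (0 ≤ M i₀ j) := by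
            rw [linf]
            norm_num
          rw [hcolsj, hval]
          have : (if decide (0 ≤ M i₀ j) then (1:ℝ) else -1) = M i₀ j := by
            rcases hM i₀ j with h | h <;> rw [h] <;> norm_num
          rw [this]
          rcases hτx01 with h | h <;> rw [h]
          exact heqM
      · -- cardinality
        have h1 : (Finset.image ecol P).card ≤ P.card := Finset.card_image_le
        have h2 : P.card ≤ G - 1 := card_parity_filter G s hδ2G hs rb
        omega
    refine ⟨fun x => decode M (fun j => hcols j x), ⟨hcols, hcols_mem, rfl⟩, ?_, ?_⟩
    · intro x hx
      have hxS := hT hx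
      simp only [Finset.coe_image, Set.mem_image, Finset.mem_coe, Finset.mem_univ] at hxS
      obtain ⟨q, _, rfl⟩ := hxS
      dsimp only
      rw [main (q.1 : ℕ) (q.2 : ℕ) q.1.isLt q.2.isLt, hτdef]
      dsimp only
      rw [if_pos hx]
    · intro x hx
      obtain ⟨hxS, hxT⟩ := hx
      simp only [Finset.coe_image, Set.mem_image, Finset.mem_coe, Finset.mem_univ] at hxS
      obtain ⟨q, _, rfl⟩ := hxS
      dsimp only
      rw [main (q.1 : ℕ) (q.2 : ℕ) q.1.isLt q.2.isLt, hτdef]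
      dsimp only
      rw [if_neg hxT]
  · -- cardinality bound
    rw [Finset.card_image_of_injective _ hinj, Finset.card_univ, Fintype.card_prod,
      Fintype.card_fin, Fintype.card_fin]
    have hcast : (δ : ℝ) ≤ 2 * G := by exact_mod_cast hδ2G
    have hdnn : (0:ℝ) ≤ d := by positivity
    push_cast
    nlinarith
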